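/- Non-smoothness criterion: let E be an equivalence relation on a Polish space X and suppose there is a Borel map f : (0,1)^ℕ → X such that (1) f s E f t whenever s − t ∈ ℓ¹, and (2) there is no comeager set A ⊆ (0,1)^ℕ whose image f(A) is contained in a single E-class. Then E is not smooth: there is no Borel map h : X → ℝ such that x E y if and only if h x = h y. -/

import Mathlib

open Set Filter Topology

/-- Affine order isomorphism between `Ioo (-1) 1` and `Ioo 0 1`. -/
noncomputable def auxE2 : Set.Ioo (-1:ℝ) 1 ≃o Set.Ioo (0:ℝ) 1 where
  toFun x := ⟨((x:ℝ)+1)/2, by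
    obtain ⟨x, hx1, hx2⟩ := x
    constructor <;> [linarith; linarith]⟩
  invFun y := ⟨2*(y:ℝ)-1, by
    obtain ⟨y, hy1, hy2⟩ := y
    constructor <;> [linarith; linarith]⟩
  left_inv x := by ext; simp; ring
  right_inv y := by ext; simp
  map_rel_iff' {a b} := by
    simp only [Equiv.coe_fn_mk, Subtype.mk_le_mk, ← Subtype.coe_le_coe]
    constructor <;> intro h <;> [linarith; linarith]

/-- A homeomorphism between `ℝ` and the open unit interval. -/
noncomputable def auxEH : ℝ ≃ₜ Set.Ioo (0:ℝ) 1 :=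
  ((orderIsoIooNegOneOne ℝ).trans auxE2).toHomeomorph

/-- Banach category-type lemma: a locally meager set in a second countable space is meager. -/
lemma aux_locally_meagre {Z : Type*} [TopologicalSpace Z] [SecondCountableTopology Z]
    {S : Set Z} (h : ∀ x : Z, ∃ O : Set Z, IsOpen O ∧ x ∈ O ∧ IsMeagre (S ∩ O)) :
    IsMeagre S := by
  obtain ⟨B, hBc, -, hB⟩ := TopologicalSpace.exists_countable_basis Z
  set C : Set (Set Z) := {b ∈ B | IsMeagre (S ∩ b)} with hC
  have hCc : C.Countable := hBc.mono (sep_subset _ _)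
  have hsub : S ⊆ ⋃ b ∈ C, (S ∩ b) := by
    intro x hx
    obtain ⟨O, hO, hxO, hm⟩ := h x
    obtain ⟨b, hbB, hxb, hbO⟩ := hB.exists_subset_of_mem_open hxO hO
    exact mem_biUnion ⟨hbB, hm.mono (inter_subset_inter_right _ hbO)⟩ ⟨hx, hxb⟩
  rw [IsMeagre]
  have hmem : (⋂ b ∈ C, (S ∩ b)ᶜ) ∈ residual Z :=
    (countable_bInter_mem hCc).mpr (fun b hb => hb.2)
  refine mem_of_superset hmem ?_
  intro x hx hxS
  obtain ⟨b, hbC, hxb⟩ := mem_iUnion₂.mp (hsub hxS)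
  exact (mem_iInter₂.mp hx b hbC) hxb

/-- Topological zero-one law for sets invariant under finitely supported translations
in `ℕ → ℝ`. -/
lemma aux_zero_one {A : Set (ℕ → ℝ)} (hA : BaireMeasurableSet A)
    (hinv : ∀ (x v : ℕ → ℝ), (Function.support v).Finite → (x + v ∈ A ↔ x ∈ A)) :
    IsMeagre A ∨ IsMeagre Aᶜ := by
  obtain ⟨U, hUo, hAU⟩ := hA.residualEq_isOpen
  have hUA : IsMeagre (U \ A) := by
    rw [IsMeagre]
    refine mem_of_superset hAU ?_
    intro x hx
    simp only [Set.mem_setOf_eq, eq_iff_iff] at hx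
    exact fun hd => hd.2 (hx.mpr hd.1)
  rcases U.eq_empty_or_nonempty with rfl | ⟨a, ha⟩
  · left
    rw [IsMeagre]
    refine mem_of_superset hAU ?_
    intro x hx
    simp only [Set.mem_setOf_eq, eq_iff_iff] at hx
    exact fun hxA => (hx.mp hxA).elim
  · right
    obtain ⟨F, u, hu, hWU⟩ := isOpen_pi_iff.mp hUo a ha
    set W : Set (ℕ → ℝ) := (F : Set ℕ).pi u with hW
    have hWo : IsOpen W := isOpen_set_pi F.finite_toSet (fun i hi => (hu i hi).1)
    have hWA : IsMeagre (W \ A) := hUA.mono (diff_subset_diff_left hWU)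
    apply aux_locally_meagre
    intro x
    classical
    set v : ℕ → ℝ := fun i => if i ∈ F then x i - a i else 0 with hv
    have hvfin : (Function.support v).Finite := by
      apply Set.Finite.subset F.finite_toSet
      intro i hi
      simp only [Function.mem_support, hv] at hi
      by_contra hiF
      exact hi (if_neg (by simpa using hiF))
    refine ⟨(Homeomorph.addRight v) '' W, (Homeomorph.addRight v).isOpenMap W hWo,
      ⟨x - v, ?_, by simp⟩, ?_⟩
    · intro i hi
      have : (x - v) i = a i := by
        simp only [Pi.sub_apply, hv]
        rw [if_pos (Finset.mem_coe.mp hi)]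
        ring
      rw [this]
      exact (hu i hi).2
    · have hsub : Aᶜ ∩ ((Homeomorph.addRight v) '' W) ⊆
          (Homeomorph.addRight v).symm ⁻¹' (W \ A) := by
        rintro z ⟨hzA, w, hwW, rfl⟩
        rw [Set.mem_preimage, Homeomorph.symm_apply_apply]
        exact ⟨hwW, fun hwA => hzA (by simpa using (hinv w v hvfin).mpr hwA)⟩
      exact (hWA.preimage_of_isOpenMap (Homeomorph.continuous _)
        (Homeomorph.isOpenMap _)).mono hsub

/-- Non-smoothness criterion: if `E` is an equivalence relation on a Polish space `X` and
there is a Borel map `f : (0,1)^ℕ → X` sending `ℓ¹`-equivalent sequences to `E`-equivalent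
points, such that no comeager subset of `(0,1)^ℕ` is mapped into a single `E`-class, then
`E` is not smooth. -/
theorem stmt_12 {X : Type*}
    [TopologicalSpace X] [PolishSpace X] [MeasurableSpace X] [BorelSpace X]
    (E : X → X → Prop) (hEe : Equivalence E)
    (f : (ℕ → Set.Ioo (0 : ℝ) 1) → X) (hf : Measurable f)
    (h1 : ∀ s t : ℕ → Set.Ioo (0 : ℝ) 1,
      Summable (fun n => |(s n : ℝ) - (t n : ℝ)|) → E (f s) (f t))
    (h2 : ¬ ∃ A ∈ residual (ℕ → Set.Ioo (0 : ℝ) 1), ∀ x ∈ A, ∀ y ∈ A, E (f x) (f y)) :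
    ¬ ∃ h : X → ℝ, Measurable h ∧ ∀ x y, E x y ↔ h x = h y := by
  rintro ⟨h, hm, hiff⟩
  let Φ : (ℕ → ℝ) ≃ₜ (ℕ → Set.Ioo (0:ℝ) 1) := Homeomorph.piCongrRight fun _ => auxEH
  set g : (ℕ → ℝ) → ℝ := fun z => h (f (Φ z)) with hg
  have hgm : Measurable g := hm.comp (hf.comp Φ.continuous.measurable)
  have hginv : ∀ (z v : ℕ → ℝ), (Function.support v).Finite → g (z + v) = g z := by
    intro z v hv
    refine (hiff _ _).mp (h1 _ _ ?_)
    apply summable_of_ne_finset_zero (s := hv.toFinset)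
    intro n hn
    have hvn : v n = 0 := by
      by_contra hc
      exact hn (hv.mem_toFinset.mpr hc)
    have : Φ (z + v) n = Φ z n := by
      simp only [Φ, Homeomorph.piCongrRight_apply, Pi.add_apply, hvn, add_zero]
    rw [this]
    simp
  have hAq : ∀ q : ℚ, IsMeagre {z : ℕ → ℝ | g z ≤ (q:ℝ)} ∨
      IsMeagre {z : ℕ → ℝ | g z ≤ (q:ℝ)}ᶜ := by
    intro q
    apply aux_zero_one
    · exact (measurableSet_le hgm measurable_const).baireMeasurableSet
    · intro z v hv
      simp only [Set.mem_setOf_eq, hginv z v hv]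
  classical
  set R : ℚ → Set (ℕ → ℝ) := fun q =>
    if IsMeagre {z : ℕ → ℝ | g z ≤ (q:ℝ)} then {z : ℕ → ℝ | g z ≤ (q:ℝ)}ᶜ
    else {z : ℕ → ℝ | g z ≤ (q:ℝ)} with hR
  have hRres : ∀ q, R q ∈ residual (ℕ → ℝ) := by
    intro q
    by_cases hq : IsMeagre {z : ℕ → ℝ | g z ≤ (q:ℝ)}
    · have hq' := hq; rw [IsMeagre] at hq'; simpa only [hR, if_pos hq] using hq'
    · have := (hAq q).resolve_left hq
      rw [IsMeagre, compl_compl] at this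
      simpa only [hR, if_neg hq] using this
  have hRint : (⋂ q : ℚ, R q) ∈ residual (ℕ → ℝ) := countable_iInter_mem.mpr hRres
  obtain ⟨z₀, hz₀⟩ : (⋂ q : ℚ, R q).Nonempty := (dense_of_mem_residual hRint).nonempty
  have hconst : ∀ z ∈ ⋂ q : ℚ, R q, g z = g z₀ := by
    intro z hz
    by_contra hne
    rcases lt_or_gt_of_ne hne with hlt | hgt
    · obtain ⟨q, hq1, hq2⟩ := exists_rat_btwn hlt
      by_cases hq : IsMeagre {w : ℕ → ℝ | g w ≤ (q:ℝ)}
      · have h1' := mem_iInter.mp hz q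
        simp only [hR, if_pos hq, mem_compl_iff, mem_setOf_eq] at h1'
        exact h1' hq1.le
      · have h2' := mem_iInter.mp hz₀ q
        simp only [hR, if_neg hq, mem_setOf_eq] at h2'
        linarith
    · obtain ⟨q, hq1, hq2⟩ := exists_rat_btwn hgt
      by_cases hq : IsMeagre {w : ℕ → ℝ | g w ≤ (q:ℝ)}
      · have h2' := mem_iInter.mp hz₀ q
        simp only [hR, if_pos hq, mem_compl_iff, mem_setOf_eq] at h2'
        exact h2' hq1.le
      · have h1' := mem_iInter.mp hz q
        simp only [hR, if_neg hq, mem_setOf_eq] at h1'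
        linarith
  apply h2
  refine ⟨Φ '' (⋂ q : ℚ, R q), ?_, ?_⟩
  · rw [← Φ.residual_map_eq]
    refine mem_map.mpr ?_
    rwa [show ⇑Φ ⁻¹' (Φ '' (⋂ q : ℚ, R q)) = ⋂ q : ℚ, R q from
      Φ.toEquiv.preimage_image _]
  · rintro x ⟨z1, hz1, rfl⟩ y ⟨z2, hz2, rfl⟩
    refine (hiff _ _).mpr ?_
    have e1 : h (f (Φ z1)) = g z1 := rfl
    have e2 : h (f (Φ z2)) = g z2 := rfl
    rw [e1, e2, hconst z1 hz1, hconst z2 hz2]
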